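/- The kernel of L (with domain H²(ℝ)) is one-dimensional, generated by x ↦ 1/cosh x: if f : ℝ → ℝ is twice continuously differentiable, square-integrable on ℝ, and satisfies −f''(x) + (2 tanh²x − 1) f(x) = 0 for all x ∈ ℝ, then there exists c ∈ ℝ such that f(x) = c/cosh x for all x. -/

import Mathlib

open MeasureTheory

/-- The kernel of `L = -d²/dx² + (2 tanh² - 1)` on `H²(ℝ)` is one-dimensional,
generated by `x ↦ 1/cosh x`. -/
theorem ker_L_one_dimensional (f : ℝ → ℝ)
    (hf : ContDiff ℝ 2 f)
    (hL2 : Integrable (fun x => f x ^ 2))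
    (hker : ∀ x : ℝ, -deriv (deriv f) x + (2 * Real.tanh x ^ 2 - 1) * f x = 0) :
    ∃ c : ℝ, ∀ x : ℝ, f x = c / Real.cosh x := by
  have hf1 : Differentiable ℝ f := hf.differentiable two_ne_zero
  have hf2 : ContDiff ℝ 1 (deriv f) := by
    rw [show (2 : WithTop ℕ∞) = 1 + 1 from rfl] at hf
    exact (contDiff_succ_iff_deriv.mp hf).2.2
  have hf'd : Differentiable ℝ (deriv f) := hf2.differentiable one_ne_zero
  have hcosh_pos : ∀ x : ℝ, 0 < Real.cosh x := Real.cosh_pos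
  have hker' : ∀ x : ℝ, deriv (deriv f) x * Real.cosh x ^ 2
      = 2 * Real.sinh x ^ 2 * f x - Real.cosh x ^ 2 * f x := by
    intro x
    have h := hker x
    have ht : Real.tanh x = Real.sinh x / Real.cosh x := Real.tanh_eq_sinh_div_cosh x
    have hc := (hcosh_pos x).ne'
    rw [ht] at h
    field_simp at h
    nlinarith [h]
  -- v = (f' cosh + f sinh) / cosh² has zero derivative
  set N : ℝ → ℝ := fun x => deriv f x * Real.cosh x + f x * Real.sinh x with hN
  set v : ℝ → ℝ := fun x => N x / Real.cosh x ^ 2 with hv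
  have hNder : ∀ x : ℝ, HasDerivAt N
      (deriv (deriv f) x * Real.cosh x + deriv f x * Real.sinh x
        + (deriv f x * Real.sinh x + f x * Real.cosh x)) x := by
    intro x
    exact (((hf'd x).hasDerivAt.mul (Real.hasDerivAt_cosh x)).add
      ((hf1 x).hasDerivAt.mul (Real.hasDerivAt_sinh x)))
  have hDder : ∀ x : ℝ, HasDerivAt (fun x => Real.cosh x ^ 2)
      ((2 : ℕ) * Real.cosh x ^ 1 * Real.sinh x) x := fun x => (Real.hasDerivAt_cosh x).pow 2
  have hvder : ∀ x : ℝ, HasDerivAt v 0 x := by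
    intro x
    have h : HasDerivAt v _ x := ((hNder x).div (hDder x) (by positivity))
    convert h using 1
    have hk := hker' x
    rw [eq_comm, div_eq_zero_iff]
    left
    simp only [hN, pow_one, Nat.cast_ofNat]
    linear_combination Real.cosh x * hk
  have hvconst : ∀ x : ℝ, v x = v 0 := by
    intro x
    exact is_const_of_deriv_eq_zero (fun y => (hvder y).differentiableAt)
      (fun y => (hvder y).deriv) x 0
  set C : ℝ := v 0 with hC
  have hNval : ∀ x : ℝ, N x = C * Real.cosh x ^ 2 := by
    intro x
    have h := hvconst x
    have hc : Real.cosh x ^ 2 ≠ 0 := by positivity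
    simp only [hv] at h
    field_simp at h
    linarith [h]
  -- U = f cosh - C(sinh cosh + x)/2 is constant
  have hUder : ∀ x : ℝ, HasDerivAt
      (fun x => f x * Real.cosh x - C * (Real.sinh x * Real.cosh x + x) / 2) 0 x := by
    intro x
    have h1 : HasDerivAt (fun x => f x * Real.cosh x) (N x) x := by
      have := (hf1 x).hasDerivAt.mul (Real.hasDerivAt_cosh x)
      exact this
    have h2 : HasDerivAt (fun x => C * (Real.sinh x * Real.cosh x + x) / 2)
        (C * (Real.cosh x * Real.cosh x + Real.sinh x * Real.sinh x + 1) / 2) x := by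
      have := (((Real.hasDerivAt_sinh x).mul (Real.hasDerivAt_cosh x)).add
        (hasDerivAt_id x)).const_mul C
      exact this.div_const 2
    have h : HasDerivAt (fun x => f x * Real.cosh x - C * (Real.sinh x * Real.cosh x + x) / 2) _ x := h1.sub h2
    convert h using 1
    have hcs : Real.cosh x ^ 2 = Real.sinh x ^ 2 + 1 := Real.cosh_sq x
    rw [hNval x]
    linear_combination (-(C / 2)) * hcs
  have hU : ∀ x : ℝ, f x * Real.cosh x - C * (Real.sinh x * Real.cosh x + x) / 2 = f 0 := by
    intro x
    have := is_const_of_deriv_eq_zero (fun y => (hUder y).differentiableAt)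
      (fun y => (hUder y).deriv) x 0
    simpa using this
  by_cases hC0 : C = 0
  · refine ⟨f 0, fun x => ?_⟩
    have h := hU x
    rw [hC0] at h
    have hc := (hcosh_pos x).ne'
    rw [eq_div_iff hc]
    linarith [h]
  · -- contradiction with integrability
    exfalso
    set M : ℝ := |f 0| with hM
    set A : ℝ := Real.arsinh (2 * (M + 1) / |C|) with hA
    have hCpos : 0 < |C| := abs_pos.mpr hC0
    have hMnn : 0 ≤ M := abs_nonneg _
    have hsA : Real.sinh A = 2 * (M + 1) / |C| := Real.sinh_arsinh _
    have hApos : 0 < A := by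
      rw [← Real.sinh_pos_iff, hsA]
      positivity
    have hbound : ∀ x : ℝ, A ≤ x → 1 ≤ f x ^ 2 := by
      intro x hx
      have hx0 : 0 ≤ x := le_trans hApos.le hx
      have hsx : Real.sinh A ≤ Real.sinh x := by
        exact Real.sinh_le_sinh.mpr hx
      have hcx : 1 ≤ Real.cosh x := Real.one_le_cosh x
      have hsx0 : 0 ≤ Real.sinh x := by
        rw [← Real.sinh_zero]; exact Real.sinh_le_sinh.mpr hx0
      have h := hU x
      -- f x * cosh x = f 0 + C * (sinh x cosh x + x)/2
      have habs : |f x| * Real.cosh x ≥ |C| * (Real.sinh x * Real.cosh x + x) / 2 - M := by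
        have h1 : f x * Real.cosh x = f 0 + C * (Real.sinh x * Real.cosh x + x) / 2 := by
          linarith [h]
        have h2 : |f x * Real.cosh x| ≥ |C * (Real.sinh x * Real.cosh x + x) / 2| - |f 0| := by
          calc |C * (Real.sinh x * Real.cosh x + x) / 2| - |f 0|
              ≤ |f 0 + C * (Real.sinh x * Real.cosh x + x) / 2| := by
                have := abs_add_le (f 0) (C * (Real.sinh x * Real.cosh x + x) / 2)
                have := abs_sub_abs_le_abs_sub (C * (Real.sinh x * Real.cosh x + x) / 2)
                  (-(f 0))
                simp only [abs_neg] at this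
                calc |C * (Real.sinh x * Real.cosh x + x) / 2| - |f 0|
                    ≤ |C * (Real.sinh x * Real.cosh x + x) / 2 - -(f 0)| := this
                  _ = |f 0 + C * (Real.sinh x * Real.cosh x + x) / 2| := by ring_nf
            _ = |f x * Real.cosh x| := by rw [h1]
        have h3 : |f x * Real.cosh x| = |f x| * Real.cosh x := by
          rw [abs_mul, abs_of_pos (hcosh_pos x)]
        have h4 : |C * (Real.sinh x * Real.cosh x + x) / 2|
            = |C| * (Real.sinh x * Real.cosh x + x) / 2 := by
          rw [abs_div, abs_mul]
          have : |Real.sinh x * Real.cosh x + x| = Real.sinh x * Real.cosh x + x := by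
            apply abs_of_nonneg
            positivity
          rw [this]
          norm_num
        rw [h3, h4] at h2
        linarith [h2]
      have key : Real.cosh x ≤ |f x| * Real.cosh x := by
        have h5 : |C| * Real.sinh A / 2 = M + 1 := by
          rw [hsA]; field_simp
        have h6 : |C| * (Real.sinh x * Real.cosh x + x) / 2
            ≥ (M + 1) * Real.cosh x := by
          have : Real.sinh x * Real.cosh x ≥ Real.sinh A * Real.cosh x := by
            nlinarith [hcosh_pos x]
          nlinarith [hCpos, hx0, hcosh_pos x]
        nlinarith [hcosh_pos x, hMnn, hcx]
      have h7 : 1 ≤ |f x| := by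
        nlinarith [hcosh_pos x, hcx]
      nlinarith [sq_abs (f x)]
    have hInt : IntegrableOn (fun x => f x ^ 2) (Set.Ici A) := hL2.integrableOn
    have h1 : IntegrableOn (fun _ : ℝ => (1 : ℝ)) (Set.Ici A) := by
      refine hInt.mono' aestronglyMeasurable_const ?_
      filter_upwards [ae_restrict_mem measurableSet_Ici] with x hx
      simpa using hbound x hx
    rw [integrableOn_const_iff] at h1
    simp [Real.volume_Ici] at h1
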